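/- Let M be an ATM. A pseudo-derivation t of M yields a derivation of M if and only if t satisfies all three conditions (I), (II), and (III). -/

import Mathlib

namespace SLPaper

/-- Terms of separation logic: variables or the constant `nil`. -/
inductive SLTerm (V : Type) where
  | var : V → SLTerm V
  | nil : SLTerm V
deriving DecidableEq

/-- Formulae of `SL_κ`: points-to atoms, predicate atoms, equalities,
disequalities, separating conjunctions and existential quantifications. -/
inductive SLForm (κ : ℕ) (V : Type) (P : Type) where
  | pts   : SLTerm V → (Fin κ → SLTerm V) → SLForm κ V P
  | pred  : P → List (SLTerm V) → SLForm κ V P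
  | eq    : SLTerm V → SLTerm V → SLForm κ V P
  | neq   : SLTerm V → SLTerm V → SLForm κ V P
  | star  : SLForm κ V P → SLForm κ V P → SLForm κ V P
  | ex    : V → SLForm κ V P → SLForm κ V P

variable {κ : ℕ} {V P Loc : Type}

/-- Interpretation of a term in a store. -/
def SLTerm.interp (nilL : Loc) (s : V → Loc) : SLTerm V → Loc
  | .var x => s x
  | .nil => nilL

/-- A heap: a finite partial map from locations to `κ`-tuples of locations,
with `nil` not allocated. -/
structure SLHeap (κ : ℕ) (Loc : Type) (nilL : Loc) where
  f : Loc → Option (Fin κ → Loc)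
  finite : {l | f l ≠ none}.Finite
  nil_not_dom : f nilL = none

def SLHeap.dom {nilL : Loc} (h : SLHeap κ Loc nilL) : Set Loc := {l | h.f l ≠ none}

/-- `HUnion h h1 h2` holds iff `h` is the disjoint union of `h1` and `h2`. -/
def HUnion {nilL : Loc} (h h1 h2 : SLHeap κ Loc nilL) : Prop :=
  h1.dom ∩ h2.dom = ∅ ∧ ∀ l, h.f l = (h1.f l).orElse (fun _ => h2.f l)

/-- Satisfaction of predicate-free formulae (predicate atoms are never satisfied). -/
def Sat [DecidableEq V] (nilL : Loc) :
    (V → Loc) → SLHeap κ Loc nilL → SLForm κ V P → Prop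
  | s, h, .pts t0 ts =>
      h.dom = {SLTerm.interp nilL s t0} ∧
      h.f (SLTerm.interp nilL s t0) = some (fun i => SLTerm.interp nilL s (ts i))
  | _, _, .pred _ _ => False
  | s, h, .eq t1 t2 => h.dom = ∅ ∧ SLTerm.interp nilL s t1 = SLTerm.interp nilL s t2
  | s, h, .neq t1 t2 => h.dom = ∅ ∧ SLTerm.interp nilL s t1 ≠ SLTerm.interp nilL s t2
  | s, h, .star φ1 φ2 =>
      ∃ h1 h2 : SLHeap κ Loc nilL, HUnion h h1 h2 ∧ Sat nilL s h1 φ1 ∧ Sat nilL s h2 φ2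
  | s, h, .ex x φ => ∃ ℓ : Loc, Sat nilL (Function.update s x ℓ) h φ

/-- The list of (occurrences of) predicate atoms of a formula, in left-to-right order. -/
def predAtoms : SLForm κ V P → List (P × List (SLTerm V))
  | .pred p a => [(p, a)]
  | .star φ1 φ2 => predAtoms φ1 ++ predAtoms φ2
  | .ex _ φ => predAtoms φ
  | _ => []

/-- A formula is predicate-free iff no predicate atom occurs in it. -/
def PredFree (φ : SLForm κ V P) : Prop := predAtoms φ = []

/-- Replace the `k`-th occurrence (counting from `n`, left to right) of a predicate
atom by `f k`; returns the new formula together with the updated counter. -/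
def replacePredsAux : SLForm κ V P → ℕ → (ℕ → SLForm κ V P) → SLForm κ V P × ℕ
  | .pred _ _, n, f => (f n, n + 1)
  | .star φ1 φ2, n, f =>
      let r1 := replacePredsAux φ1 n f
      let r2 := replacePredsAux φ2 r1.2 f
      (.star r1.1 r2.1, r2.2)
  | .ex x φ, n, f =>
      let r := replacePredsAux φ n f
      (.ex x r.1, r.2)
  | φ, n, _ => (φ, n)

/-- Replace the `k`-th occurrence of a predicate atom of `φ` by `f k`, for every `k`. -/
def replacePreds (φ : SLForm κ V P) (f : ℕ → SLForm κ V P) : SLForm κ V P :=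
  (replacePredsAux φ 0 f).1

/-- Free variables of a term. -/
def SLTerm.fv : SLTerm V → Set V
  | .var x => {x}
  | .nil => ∅

/-- Free variables of a formula. -/
def SLForm.fv : SLForm κ V P → Set V
  | .pts t ts => t.fv ∪ {v | ∃ i, v ∈ (ts i).fv}
  | .pred _ a => {v | ∃ t ∈ a, v ∈ t.fv}
  | .eq t1 t2 => t1.fv ∪ t2.fv
  | .neq t1 t2 => t1.fv ∪ t2.fv
  | .star φ1 φ2 => φ1.fv ∪ φ2.fv
  | .ex x φ => φ.fv \ {x}

def SLTerm.subst (σ : V → SLTerm V) : SLTerm V → SLTerm V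
  | .var x => σ x
  | .nil => .nil

/-- Substitution in a formula (bound variables are not substituted). -/
def SLForm.subst [DecidableEq V] (σ : V → SLTerm V) : SLForm κ V P → SLForm κ V P
  | .pts t ts => .pts (t.subst σ) (fun i => (ts i).subst σ)
  | .pred p a => .pred p (a.map (SLTerm.subst σ))
  | .eq t1 t2 => .eq (t1.subst σ) (t2.subst σ)
  | .neq t1 t2 => .neq (t1.subst σ) (t2.subst σ)
  | .star φ1 φ2 => .star (φ1.subst σ) (φ2.subst σ)
  | .ex x φ => .ex x (φ.subst (Function.update σ x (.var x)))

/-- Finite trees: a finite nonempty prefix-closed set of finite sequences of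
natural numbers, closed under taking smaller siblings, with a labeling function. -/
structure FinTree (α : Type) where
  nodes : Set (List ℕ)
  finite : nodes.Finite
  root_mem : [] ∈ nodes
  prefix_closed : ∀ w i, w ++ [i] ∈ nodes → w ∈ nodes
  sibling_closed : ∀ w (i j : ℕ), w ++ [i] ∈ nodes → j < i → w ++ [j] ∈ nodes
  label : List ℕ → α

/-- Relabeling of a tree. -/
def FinTree.relabel {α β : Type} (t : FinTree α) (f : List ℕ → β) : FinTree β :=
  ⟨t.nodes, t.finite, t.root_mem, t.prefix_closed, t.sibling_closed, f⟩

/-- The subtree of `t` rooted at `w`. -/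
def FinTree.subtree {α : Type} (t : FinTree α) (w : List ℕ) : FinTree α where
  nodes := {w' | w ++ w' ∈ t.nodes} ∪ {[]}
  finite := by
    apply Set.Finite.union _ (Set.finite_singleton _)
    have hinj : Set.InjOn (fun w' => w ++ w') ((fun w' => w ++ w') ⁻¹' t.nodes) := by
      intro a _ b _ hab
      simpa using hab
    exact Set.Finite.subset (Set.Finite.preimage hinj t.finite) (fun _ h => h)
  root_mem := Or.inr rfl
  prefix_closed := by
    rintro w' i (h | h)
    · exact Or.inl (t.prefix_closed (w ++ w') i (by simpa [List.append_assoc] using h))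
    · simp at h
  sibling_closed := by
    rintro w' i j (h | h) hj
    · have := t.sibling_closed (w ++ w') i j (by simpa [List.append_assoc] using h) hj
      exact Or.inl (by simpa [List.append_assoc] using this)
    · simp at h
  label := fun w' => t.label (w ++ w')

/-- A set of rules assigns to each predicate a set of rule bodies. -/
abbrev RuleSet (κ : ℕ) (V P : Type) := P → Set (SLForm κ V P)

-- The substitution replacing the parameters `x_1, …, x_n` (given by the
-- injection `paramOf`) of a rule by the actual arguments `args`.
open Classical in
noncomputable def argSubst (paramOf : ℕ → V) (args : List (SLTerm V)) (v : V) : SLTerm V :=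
  if h : ∃ j, j < args.length ∧ paramOf j = v then args.getD h.choose (.var v)
  else .var v

/-- `IsUnfoldingTree S paramOf a u`: `u` is an unfolding tree of the predicate
atom `a` with respect to the set of rules `S`. Each node is labeled by a pair of
a predicate atom and a formula obtained from a rule body by instantiating the
parameters, and there is a bijection between the occurrences of predicate atoms
of that formula and the children of the node, preserving the atoms. -/
def IsUnfoldingTree [DecidableEq V] (S : RuleSet κ V P) (paramOf : ℕ → V)
    (a : P × List (SLTerm V))
    (u : FinTree ((P × List (SLTerm V)) × SLForm κ V P)) : Prop :=
  (u.label []).1 = a ∧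
  ∀ w ∈ u.nodes,
    (∃ ρ ∈ S (u.label w).1.1,
        (u.label w).2 = SLForm.subst (argSubst paramOf (u.label w).1.2) ρ) ∧
    ∃ n : ℕ, (∀ i : ℕ, w ++ [i] ∈ u.nodes ↔ i < n) ∧
      ∃ hn : (predAtoms (u.label w).2).length = n,
        ∃ σ : Fin n ≃ Fin n,
          ∀ k : Fin n,
            (u.label (w ++ [(σ k : ℕ)])).1 =
              (predAtoms (u.label w).2).get (Fin.cast hn.symm k)

/-- `CharForm u φ`: `φ` is a characteristic formula of the unfolding tree `u`,
obtained by recursively replacing each occurrence of a predicate atom in the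
formula labeling the root by the characteristic formula of the subtree rooted
at the corresponding child, relative to some choice of an atom-preserving
bijection between occurrences of predicate atoms and children. -/
inductive CharForm : FinTree ((P × List (SLTerm V)) × SLForm κ V P) → SLForm κ V P → Prop where
  | mk (u : FinTree ((P × List (SLTerm V)) × SLForm κ V P)) (n : ℕ)
      (hch : ∀ i : ℕ, [i] ∈ u.nodes ↔ i < n)
      (hn : (predAtoms (u.label []).2).length = n)
      (σ : Fin n ≃ Fin n)
      (hσ : ∀ k : Fin n,
        ((u.subtree [(σ k : ℕ)]).label []).1 =
          (predAtoms (u.label []).2).get (Fin.cast hn.symm k))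
      (φs : Fin n → SLForm κ V P)
      (hrec : ∀ k : Fin n, CharForm (u.subtree [(σ k : ℕ)]) (φs k)) :
      CharForm u (replacePreds (u.label []).2
        (fun j => if h : j < n then φs ⟨j, h⟩ else (u.label []).2))

/-- `SatS S paramOf s h φ`: the structure `(s,h)` is an `S`-model of `φ`, i.e. it
satisfies some predicate-free formula obtained from `φ` by replacing each
occurrence of a predicate atom by the characteristic formula of one of its
unfolding trees w.r.t. `S`. -/
def SatS [DecidableEq V] {nilL : Loc} (S : RuleSet κ V P) (paramOf : ℕ → V)
    (s : V → Loc) (h : SLHeap κ Loc nilL) (φ : SLForm κ V P) : Prop :=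
  ∃ f : ℕ → SLForm κ V P,
    (∀ j : ℕ, ∀ hj : j < (predAtoms φ).length,
      ∃ u, IsUnfoldingTree S paramOf ((predAtoms φ).get ⟨j, hj⟩) u ∧ CharForm u (f j)) ∧
    Sat nilL s h (replacePreds φ f)

/-- No points-to atom occurs in the formula. -/
def NoPts : SLForm κ V P → Prop
  | .pts _ _ => False
  | .star φ1 φ2 => NoPts φ1 ∧ NoPts φ2
  | .ex _ φ => NoPts φ
  | _ => True

/-- A rule body is progressing (w.r.t. the first parameter `x1`): it has the form
`∃z1…∃zm. x1 ↦ (y1,…,yκ) * ψ` where `ψ` contains no points-to atom (the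
degenerate case of an empty `ψ` corresponds to a bare points-to atom). -/
inductive ProgBody (x1 : V) : SLForm κ V P → Prop where
  | base (ts : Fin κ → SLTerm V) (ψ : SLForm κ V P) (hψ : NoPts ψ) :
      ProgBody x1 (.star (.pts (.var x1) ts) ψ)
  | base0 (ts : Fin κ → SLTerm V) : ProgBody x1 (.pts (.var x1) ts)
  | ex (z : V) (φ : SLForm κ V P) : ProgBody x1 φ → ProgBody x1 (.ex z φ)

/-- A rule body is connected: it is progressing and moreover every occurrence of a
predicate atom in `ψ` has the form `q(y_i, u_1, …, u_{#q−1})`, where `y_i` is one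
of the fields of the points-to atom. -/
inductive ConnBody (x1 : V) : SLForm κ V P → Prop where
  | base (ts : Fin κ → SLTerm V) (ψ : SLForm κ V P) (hψ : NoPts ψ)
      (hc : ∀ pa ∈ predAtoms ψ, ∃ i : Fin κ, pa.2.head? = some (ts i)) :
      ConnBody x1 (.star (.pts (.var x1) ts) ψ)
  | base0 (ts : Fin κ → SLTerm V) : ConnBody x1 (.pts (.var x1) ts)
  | ex (z : V) (φ : SLForm κ V P) : ConnBody x1 φ → ConnBody x1 (.ex z φ)

/-- The list of existentially quantified variables in the prefix of a formula. -/
def exPrefix : SLForm κ V P → List V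
  | .ex z φ => z :: exPrefix φ
  | _ => []

/-- The matrix of a formula (after stripping the existential prefix). -/
def matrix : SLForm κ V P → SLForm κ V P
  | .ex _ φ => matrix φ
  | φ => φ

/-- A set of rules is established: for each rule `p(x⃗) ⇐ ∃z1…∃zm.ψ` and every
`S`-model `(s,h)` of `ψ`, the locations `s(z1),…,s(zm)` are all allocated. -/
def Established [DecidableEq V] (nilL : Loc) (S : RuleSet κ V P) (paramOf : ℕ → V) : Prop :=
  ∀ p ρ, ρ ∈ S p → ∀ (s : V → Loc) (h : SLHeap κ Loc nilL),
    SatS S paramOf s h (matrix ρ) → ∀ z ∈ exPrefix ρ, s z ∈ h.dom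

end SLPaper

namespace SLPaper

/-- An alternating Turing machine `M = (Q,Γ,δ,q0,g)`; moves are encoded by
booleans (`false` = `←`, `true` = `→`) and `g q = false` means that `q` is
existential (`∨`) while `g q = true` means that `q` is universal (`∧`). -/
structure ATM (Q Γ : Type) where
  blank : Γ
  delta : Set (Q × Γ × Q × Γ × Bool)
  write_ne_blank : ∀ τ ∈ delta, τ.2.2.2.1 ≠ blank
  q0 : Q
  g : Q → Bool

/-- A configuration `(q, w, i)`. -/
abbrev TMConfig (Q Γ : Type) := Q × (ℕ → Γ) × ℕ

/-- A transition `(q, a, q', b, μ)`. -/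
abbrev TMTrans (Q Γ : Type) := Q × Γ × Q × Γ × Bool

/-- The step relation of an ATM: `(q,w,i) →_{(q,a,q',b,μ)} (q',w[i←b],i^μ)`,
requiring `w(i) = a` and `i > 0` when `μ = ←`. -/
def ATM.Step {Q Γ : Type} (M : ATM Q Γ) (τ : TMTrans Q Γ) (c c' : TMConfig Q Γ) : Prop :=
  τ ∈ M.delta ∧ c.1 = τ.1 ∧ c.2.1 c.2.2 = τ.2.1 ∧ c'.1 = τ.2.2.1 ∧
  c'.2.1 = Function.update c.2.1 c.2.2 τ.2.2.2.1 ∧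
  ((τ.2.2.2.2 = true ∧ c'.2.2 = c.2.2 + 1) ∨
   (τ.2.2.2.2 = false ∧ 0 < c.2.2 ∧ c'.2.2 + 1 = c.2.2))

/-- Labels of derivation trees: branching nodes carry configurations, action
nodes carry triples `(a,b,μ)`. -/
abbrev DLabel (Q Γ : Type) := TMConfig Q Γ ⊕ (Γ × Γ × Bool)

/-- Labels of pseudo-derivation trees: branching nodes carry pairs `(q,i)`,
action nodes carry triples `(a,b,μ)`. -/
abbrev PLabel (Q Γ : Type) := (Q × ℕ) ⊕ (Γ × Γ × Bool)

/-- `IsDerivation M w0 t`: `t` is a derivation of `M` starting from the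
configuration `(q0, w0, 0)`. -/
def IsDerivation {Q Γ : Type} (M : ATM Q Γ) (w0 : ℕ → Γ) (t : FinTree (DLabel Q Γ)) : Prop :=
  t.label [] = Sum.inl (M.q0, w0, 0) ∧
  (∀ w ∈ t.nodes,
     if w.length % 2 = 0 then
       ∃ c : TMConfig Q Γ, t.label w = Sum.inl c ∧ {j | c.2.1 j ≠ M.blank}.Finite
     else ∃ act : Γ × Γ × Bool, t.label w = Sum.inr act ∧ act.2.1 ≠ M.blank) ∧
  ∀ w ∈ t.nodes, ∀ q tp i, t.label w = Sum.inl (q, tp, i) →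
    (M.g q = false →
      (∀ k, w ++ [k] ∈ t.nodes ↔ k = 0) ∧
      ∃ a b μ q', t.label (w ++ [0]) = Sum.inr (a, b, μ) ∧
        (q, a, q', b, μ) ∈ M.delta ∧
        (∀ k, w ++ [0, k] ∈ t.nodes ↔ k = 0) ∧
        ∃ c', t.label (w ++ [0, 0]) = Sum.inl c' ∧ M.Step (q, a, q', b, μ) (q, tp, i) c') ∧
    (M.g q = true →
      ∃ n, (∀ k, w ++ [k] ∈ t.nodes ↔ k < n) ∧
      ∃ e : Fin n ≃ {τ : TMTrans Q Γ // τ ∈ M.delta ∧ τ.1 = q ∧ τ.2.1 = tp i},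
        ∀ k : Fin n,
          t.label (w ++ [(k : ℕ)]) =
            Sum.inr ((e k).1.2.1, (e k).1.2.2.2.1, (e k).1.2.2.2.2) ∧
          (∀ m, w ++ [(k : ℕ), m] ∈ t.nodes ↔ m = 0) ∧
          ∃ c', t.label (w ++ [(k : ℕ), 0]) = Sum.inl c' ∧ M.Step (e k).1 (q, tp, i) c')

/-- `M` accepts the tape `w0` iff it admits a derivation starting from `(q0, w0, 0)`. -/
def ATM.Accepts {Q Γ : Type} (M : ATM Q Γ) (w0 : ℕ → Γ) : Prop :=
  ∃ t : FinTree (DLabel Q Γ), IsDerivation M w0 t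

/-- `IsPseudoDerivation M t`: `t` is a pseudo-derivation of `M`: the conditions
on derivations are relaxed by dropping all constraints on the tape contents and
on the positions of the head. -/
def IsPseudoDerivation {Q Γ : Type} (M : ATM Q Γ) (t : FinTree (PLabel Q Γ)) : Prop :=
  t.label [] = Sum.inl (M.q0, 0) ∧
  (∀ w ∈ t.nodes,
     if w.length % 2 = 0 then
       ∃ c : Q × ℕ, t.label w = Sum.inl c
     else ∃ act : Γ × Γ × Bool, t.label w = Sum.inr act ∧ act.2.1 ≠ M.blank) ∧
  ∀ w ∈ t.nodes, ∀ q i, t.label w = Sum.inl (q, i) →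
    (M.g q = false →
      (∀ k, w ++ [k] ∈ t.nodes ↔ k = 0) ∧
      ∃ a b μ q' j, t.label (w ++ [0]) = Sum.inr (a, b, μ) ∧
        (q, a, q', b, μ) ∈ M.delta ∧
        (∀ k, w ++ [0, k] ∈ t.nodes ↔ k = 0) ∧
        t.label (w ++ [0, 0]) = Sum.inl (q', j)) ∧
    (M.g q = true →
      ∃ n, (∀ k, w ++ [k] ∈ t.nodes ↔ k < n) ∧
      ∃ e : Fin n ≃ {τ : TMTrans Q Γ // τ ∈ M.delta ∧ τ.1 = q},
        ∀ k : Fin n,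
          t.label (w ++ [(k : ℕ)]) =
            Sum.inr ((e k).1.2.1, (e k).1.2.2.2.1, (e k).1.2.2.2.2) ∧
          (∀ m, w ++ [(k : ℕ), m] ∈ t.nodes ↔ m = 0) ∧
          ∃ j, t.label (w ++ [(k : ℕ), 0]) = Sum.inl ((e k).1.2.2.1, j))

/-- The tape contents at a node `w` of a pseudo-derivation, obtained by replaying,
from the empty tape, the write actions along the path from the root to `w`. -/
def tapeAt {Q Γ : Type} (M : ATM Q Γ) (t : FinTree (PLabel Q Γ)) (w : List ℕ) : ℕ → Γ :=
  (List.range (w.length / 2)).foldl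
    (fun tp k =>
      match t.label (w.take (2 * k)), t.label (w.take (2 * k + 1)) with
      | Sum.inl (_, i), Sum.inr (_, b, _) => Function.update tp i b
      | _, _ => tp)
    (fun _ => M.blank)

/-- The top-down relabeling of a pseudo-derivation into a (candidate) derivation:
the root `(q0,0)` becomes `(q0,ε,0)`, and each branching node `(q,i)` is labeled
by the configuration whose tape is determined by the actions above it. -/
def relabelTree {Q Γ : Type} (M : ATM Q Γ) (t : FinTree (PLabel Q Γ)) : FinTree (DLabel Q Γ) :=
  t.relabel (fun w =>
    match t.label w with
    | Sum.inl (q, i) => Sum.inl (q, tapeAt M t w, i)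
    | Sum.inr act => Sum.inr act)

/-- A pseudo-derivation yields a derivation iff its top-down relabeling is a
derivation of `M` starting from the empty tape. -/
def YieldsDerivation {Q Γ : Type} (M : ATM Q Γ) (t : FinTree (PLabel Q Γ)) : Prop :=
  IsDerivation M (fun _ => M.blank) (relabelTree M t)

/-- Condition (I): the position of the head changes according to the action
executed between adjacent configurations. -/
def CondI {Q Γ : Type} (M : ATM Q Γ) (t : FinTree (PLabel Q Γ)) : Prop :=
  ∀ (w : List ℕ) (k l : ℕ) (q : Q) (i : ℕ) (a b : Γ) (μ : Bool) (q' : Q) (i' : ℕ),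
    w ++ [k, l] ∈ t.nodes →
    t.label w = Sum.inl (q, i) →
    t.label (w ++ [k]) = Sum.inr (a, b, μ) →
    t.label (w ++ [k, l]) = Sum.inl (q', i') →
    (μ = true → i' = i + 1) ∧ (μ = false → i = i' + 1)

/-- Condition (II): the symbol read at a position is the symbol previously
written at that position, if no intermediate branching node visits it. -/
def CondII {Q Γ : Type} (M : ATM Q Γ) (t : FinTree (PLabel Q Γ)) : Prop :=
  ∀ (w v : List ℕ) (k' : ℕ) (q : Q) (i : ℕ) (a b : Γ) (μ : Bool)
    (q' : Q) (a' b' : Γ) (μ' : Bool),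
    v ≠ [] → (w ++ v) ∈ t.nodes → Even w.length → Even (w ++ v).length →
    t.label w = Sum.inl (q, i) →
    t.label (w ++ v.take 1) = Sum.inr (a, b, μ) →
    t.label (w ++ v) = Sum.inl (q', i) →
    (w ++ v) ++ [k'] ∈ t.nodes →
    t.label ((w ++ v) ++ [k']) = Sum.inr (a', b', μ') →
    (∀ u, u <+: v → u ≠ [] → u ≠ v → Even (w ++ u).length →
      ∀ (q'' : Q) (i'' : ℕ), t.label (w ++ u) = Sum.inl (q'', i'') → i'' ≠ i) →
    a' = b

/-- Condition (III): a symbol read at a position never written before (along the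
path from the root) must be the blank. -/
def CondIII {Q Γ : Type} (M : ATM Q Γ) (t : FinTree (PLabel Q Γ)) : Prop :=
  ∀ (w : List ℕ) (k : ℕ) (q : Q) (i : ℕ) (a b : Γ) (μ : Bool),
    w ++ [k] ∈ t.nodes →
    t.label w = Sum.inl (q, i) →
    t.label (w ++ [k]) = Sum.inr (a, b, μ) →
    (∀ u, u <+: w → u ≠ w → Even u.length →
      ∀ (q'' : Q) (i'' : ℕ), t.label u = Sum.inl (q'', i'') → i'' ≠ i) →
    a = M.blank

/-- An execution of length `n`: a sequence of configurations starting in the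
initial state, at head position `0`, on an almost-everywhere blank tape, where
consecutive configurations are related by the step relation via the
corresponding transitions. -/
def Execution {Q Γ : Type} (M : ATM Q Γ) (n : ℕ)
    (cs : ℕ → TMConfig Q Γ) (τs : ℕ → TMTrans Q Γ) : Prop :=
  (cs 0).1 = M.q0 ∧ (cs 0).2.2 = 0 ∧ {j | (cs 0).2.1 j ≠ M.blank}.Finite ∧
  ∀ k, k < n → M.Step (τs k) (cs k) (cs (k + 1))

/-- The length of the non-blank portion of a tape. -/
noncomputable def tapeLen {Q Γ : Type} (M : ATM Q Γ) (w : ℕ → Γ) : ℕ :=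
  sInf {n | ∀ j, n ≤ j → w j = M.blank}

/-- The tape containing the word `w` followed by blanks. -/
def wordTape {Γ : Type} (blank : Γ) (w : List Γ) : ℕ → Γ :=
  fun j => w.getD j blank

end SLPaper

namespace SLPaper

section Aux

variable {Q Γ : Type} (M : ATM Q Γ) (t : FinTree (PLabel Q Γ))

lemma mem_of_append {α : Type} (t : FinTree α) :
    ∀ (v w : List ℕ), w ++ v ∈ t.nodes → w ∈ t.nodes := by
  intro v
  induction v using List.reverseRecOn with
  | nil => intro w h; simpa using h
  | append_singleton v j ih =>
    intro w h
    exact ih w (t.prefix_closed (w ++ v) j (by simpa [List.append_assoc] using h))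

lemma label_even (ht : IsPseudoDerivation M t) {w : List ℕ} (hw : w ∈ t.nodes)
    (he : w.length % 2 = 0) : ∃ q i, t.label w = Sum.inl (q, i) := by
  have h := ht.2.1 w hw
  rw [if_pos he] at h
  obtain ⟨⟨q, i⟩, h⟩ := h
  exact ⟨q, i, h⟩

lemma label_odd (ht : IsPseudoDerivation M t) {w : List ℕ} (hw : w ∈ t.nodes)
    (he : w.length % 2 = 1) :
    ∃ a b μ, t.label w = Sum.inr (a, b, μ) ∧ b ≠ M.blank := by
  have h := ht.2.1 w hw
  rw [if_neg (by omega)] at h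
  obtain ⟨⟨a, b, μ⟩, h1, h2⟩ := h
  exact ⟨a, b, μ, h1, h2⟩

lemma even_of_label_inl (ht : IsPseudoDerivation M t) {w : List ℕ} {q : Q} {i : ℕ}
    (hw : w ∈ t.nodes) (h : t.label w = Sum.inl (q, i)) : w.length % 2 = 0 := by
  by_contra hne
  obtain ⟨a, b, μ, h2, -⟩ := label_odd M t ht hw (by omega)
  rw [h] at h2
  exact absurd h2 (by simp)

lemma tapeAt_nil : tapeAt M t [] = fun _ => M.blank := rfl

lemma tapeAt_pair {w : List ℕ} {q : Q} {i : ℕ} {a b : Γ} {μ : Bool} (k l : ℕ)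
    (he : w.length % 2 = 0)
    (h1 : t.label w = Sum.inl (q, i))
    (h2 : t.label (w ++ [k]) = Sum.inr (a, b, μ)) :
    tapeAt M t (w ++ [k, l]) = Function.update (tapeAt M t w) i b := by
  obtain ⟨m, hm⟩ : ∃ m, w.length = 2 * m := ⟨w.length / 2, by omega⟩
  have e1 : (w ++ [k, l]).length / 2 = m + 1 := by
    have : (w ++ [k, l]).length = 2 * m + 2 := by simp [hm]
    omega
  have e2 : w.length / 2 = m := by omega
  have t3 : (w ++ [k, l]).take (2 * m) = w := by
    rw [show 2 * m = w.length from hm.symm]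
    exact List.take_left
  have t4 : (w ++ [k, l]).take (2 * m + 1) = w ++ [k] := by
    rw [show w ++ [k, l] = (w ++ [k]) ++ [l] by simp,
        show 2 * m + 1 = (w ++ [k]).length by simp [hm]]
    exact List.take_left
  unfold tapeAt
  rw [e1, e2, List.range_succ, List.foldl_append, List.foldl_cons, List.foldl_nil]
  simp only [t3, t4, h1, h2]
  refine congrArg (fun z : ℕ → Γ => Function.update z i b) ?_
  apply List.foldl_ext
  intro tp j hj
  have hj' := List.mem_range.mp hj
  simp only [show (w ++ [k, l]).take (2 * j) = w.take (2 * j) from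
      List.take_append_of_le_length (by omega),
    show (w ++ [k, l]).take (2 * j + 1) = w.take (2 * j + 1) from
      List.take_append_of_le_length (by omega)]

lemma tapeAt_no_write (ht : IsPseudoDerivation M t) :
    ∀ (d : ℕ) (w v : List ℕ) (i : ℕ), v.length = 2 * d → w.length % 2 = 0 →
    w ++ v ∈ t.nodes →
    (∀ u, u <+: v → u ≠ v → (w ++ u).length % 2 = 0 →
      ∀ q'' i'', t.label (w ++ u) = Sum.inl (q'', i'') → i'' ≠ i) →
    tapeAt M t (w ++ v) i = tapeAt M t w i := by
  intro d
  induction d with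
  | zero =>
    intro w v i hv _ _ _
    have : v = [] := List.length_eq_zero_iff.mp (by omega)
    simp [this]
  | succ d ih =>
    intro w v i hv hw hmem hno
    rcases v with _ | ⟨c, _ | ⟨e, v'⟩⟩
    · simp at hv
    · simp at hv; omega
    · have hassoc : ∀ u : List ℕ, w ++ (c :: e :: u) = (w ++ [c, e]) ++ u := by
        intro u; simp
      have hwmem : w ∈ t.nodes := mem_of_append t _ w hmem
      obtain ⟨q₀, i₀, hq₀⟩ := label_even M t ht hwmem hw
      have hcmem : w ++ [c] ∈ t.nodes := by
        apply mem_of_append t (e :: v') (w ++ [c])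
        simpa [List.append_assoc] using hmem
      obtain ⟨a₀, b₀, μ₀, hb₀, -⟩ := label_odd M t ht hcmem (by simp; omega)
      have hstep : tapeAt M t (w ++ [c, e]) = Function.update (tapeAt M t w) i₀ b₀ :=
        tapeAt_pair M t c e hw hq₀ hb₀
      have hne : i₀ ≠ i := by
        apply hno [] List.nil_prefix (by simp) (by simpa using hw) q₀ i₀
        simpa using hq₀
      have hrec : tapeAt M t ((w ++ [c, e]) ++ v') i = tapeAt M t (w ++ [c, e]) i := by
        apply ih (w ++ [c, e]) v' i
        · simp at hv ⊢; omega
        · simp; omega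
        · rw [← hassoc]; exact hmem
        · intro u hu hune hul q'' i'' hlab
          apply hno (c :: e :: u)
            (by simpa [List.cons_prefix_cons] using hu)
            (by simpa using hune)
            (by rw [hassoc]; exact hul) q'' i''
          rw [hassoc]; exact hlab
      calc tapeAt M t (w ++ c :: e :: v') i
          = tapeAt M t ((w ++ [c, e]) ++ v') i := by rw [← hassoc]
        _ = tapeAt M t (w ++ [c, e]) i := hrec
        _ = Function.update (tapeAt M t w) i₀ b₀ i := by rw [hstep]
        _ = tapeAt M t w i := Function.update_of_ne (Ne.symm hne) _ _

lemma foldl_finite (l : List ℕ) :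
    ∀ (f : (ℕ → Γ) → ℕ → (ℕ → Γ)),
    (∀ tp k, f tp k = tp ∨ ∃ i b, f tp k = Function.update tp i b) →
    ∀ init : ℕ → Γ, {j | init j ≠ M.blank}.Finite →
    {j | (l.foldl f init) j ≠ M.blank}.Finite := by
  induction l with
  | nil => intro f hf init h; simpa using h
  | cons x l ih =>
    intro f hf init h
    rw [List.foldl_cons]
    apply ih f hf
    rcases hf init x with h1 | ⟨i, b, h1⟩
    · rwa [h1]
    · rw [h1]
      apply (h.insert i).subset
      intro j hj
      by_cases hji : j = i
      · simp [hji]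
      · right; simpa [Function.update_of_ne hji] using hj

lemma tapeAt_finite (w : List ℕ) : {j | tapeAt M t w j ≠ M.blank}.Finite := by
  unfold tapeAt
  apply foldl_finite
  · intro tp k
    rcases h1 : t.label (w.take (2 * k)) with ⟨q, i⟩ | act
    · rcases h2 : t.label (w.take (2 * k + 1)) with c | ⟨a, b, μ⟩
      · left; simp [h1, h2]
      · right; exact ⟨i, b, by simp [h1, h2]⟩
    · left; simp [h1]
  · simpa using Set.finite_empty

lemma read_eq_tape (ht : IsPseudoDerivation M t) (hII : CondII M t) (hIII : CondIII M t)
    {w : List ℕ} {k : ℕ} {q : Q} {i : ℕ} {a b : Γ} {μ : Bool}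
    (hmem : w ++ [k] ∈ t.nodes)
    (hq : t.label w = Sum.inl (q, i))
    (ha : t.label (w ++ [k]) = Sum.inr (a, b, μ)) :
    a = tapeAt M t w i := by
  classical
  have hwmem : w ∈ t.nodes := mem_of_append t [k] w hmem
  have hwe : w.length % 2 = 0 := even_of_label_inl M t ht hwmem hq
  set P : ℕ → Prop := fun m => m % 2 = 0 ∧ m < w.length ∧
    ∃ q'', t.label (w.take m) = Sum.inl (q'', i) with hPdef
  by_cases hex : ∃ m, P m
  · obtain ⟨m, hm⟩ := hex
    have hPm₀ : P (Nat.findGreatest P w.length) :=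
      Nat.findGreatest_spec (le_of_lt hm.2.1) hm
    set m₀ := Nat.findGreatest P w.length with hm₀def
    have hmax : ∀ m', m₀ < m' → m' % 2 = 0 → m' < w.length →
        ∀ q'' i'', t.label (w.take m') = Sum.inl (q'', i'') → i'' ≠ i := by
      intro m' h1 h2 h3 q'' i'' hl heq
      exact Nat.findGreatest_is_greatest h1 (le_of_lt h3) ⟨h2, h3, q'', heq ▸ hl⟩
    obtain ⟨hm₀e, hm₀lt, q₀, hq₀⟩ := hPm₀
    obtain ⟨u, v, rfl, hul, hqu⟩ : ∃ u v, w = u ++ v ∧ u.length = m₀ ∧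
        t.label u = Sum.inl (q₀, i) :=
      ⟨w.take m₀, w.drop m₀, (List.take_append_drop _ _).symm,
        by rw [List.length_take]; omega, hq₀⟩
    have htake : ∀ u' : List ℕ, u' <+: v → (u ++ v).take (u ++ u').length = u ++ u' := by
      intro u' hu'
      obtain ⟨r, hr⟩ := hu'
      rw [← hr, show u ++ (u' ++ r) = (u ++ u') ++ r by simp]
      exact List.take_left
    have hmax' : ∀ u' : List ℕ, u' <+: v → u' ≠ [] → u' ≠ v →
        ∀ q'' i'', t.label (u ++ u') = Sum.inl (q'', i'') → i'' ≠ i := by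
      intro u' hu' hne hnev q'' i'' hlab
      have hlen : (u ++ u').length = m₀ + u'.length := by simp [hul]
      have hlt : (u ++ u').length < (u ++ v).length := by
        have h1 : u'.length < v.length := by
          rcases hu' with ⟨r, hr⟩
          rcases r with _ | ⟨x, r⟩
          · simp at hr; exact absurd hr hnev
          · rw [← hr]; simp
        simp [hlen, hul]; omega
      have hi'' : t.label ((u ++ v).take (u ++ u').length) = Sum.inl (q'', i'') := by
        rw [htake u' hu']; exact hlab
      have heven : (u ++ u').length % 2 = 0 := by
        -- label is inl, node is in tree
        have hmem' : u ++ u' ∈ t.nodes := by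
          rcases hu' with ⟨r, hr⟩
          apply mem_of_append t r
          have heq : (u ++ u') ++ r = u ++ v := by rw [← hr]; simp
          rw [heq]; exact hwmem
        exact even_of_label_inl M t ht hmem' hlab
      apply hmax (u ++ u').length _ heven hlt q'' i'' hi''
      have : 0 < u'.length := List.length_pos_iff.mpr hne
      omega
    have hvne : v ≠ [] := by
      intro h
      subst h
      have : (u ++ ([] : List ℕ)).length = m₀ := by simp [hul]
      omega
    rcases v with _ | ⟨c, v₂⟩
    · exact absurd rfl hvne
    · -- apply CondII
      have hmemc : u ++ [c] ∈ t.nodes := by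
        apply mem_of_append t v₂ (u ++ [c])
        rw [show (u ++ [c]) ++ v₂ = u ++ c :: v₂ by simp]
        exact hwmem
      obtain ⟨a₀, b₀, μ₀, hb₀, -⟩ := label_odd M t ht hmemc (by simp [hul]; omega)
      have hueven : u.length % 2 = 0 := by omega
      have haeq : a = b₀ := by
        apply hII u (c :: v₂) k q₀ i a₀ b₀ μ₀ q a b μ (by simp) hwmem
          (Nat.even_iff.mpr hueven) (Nat.even_iff.mpr hwe) hqu
          (by simpa using hb₀) hq hmem ha
        intro u' hu' hne hnev heven q'' i'' hlab
        exact hmax' u' hu' hne hnev q'' i'' hlab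
      -- compute tapeAt
      rcases v₂ with _ | ⟨e, v'⟩
      · exfalso; simp [hul] at hwe; omega
      · have hassoc : ∀ z : List ℕ, u ++ (c :: e :: z) = (u ++ [c, e]) ++ z := by
          intro z; simp
        have hpair : tapeAt M t (u ++ [c, e]) = Function.update (tapeAt M t u) i b₀ :=
          tapeAt_pair M t c e hueven hqu (by simpa using hb₀)
        have hnw : tapeAt M t ((u ++ [c, e]) ++ v') i = tapeAt M t (u ++ [c, e]) i := by
          apply tapeAt_no_write M t ht (v'.length / 2)
          · have : (u ++ c :: e :: v').length % 2 = 0 := hwe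
            simp [hul] at this ⊢; omega
          · simp; omega
          · rw [← hassoc]; exact hwmem
          · intro u' hu' hune hul' q'' i'' hlab
            apply hmax' (c :: e :: u')
              (by simpa [List.cons_prefix_cons] using hu')
              (by simp)
              (by simpa using hune) q'' i''
            rw [hassoc]; exact hlab
        rw [haeq, show u ++ c :: e :: v' = (u ++ [c, e]) ++ v' from hassoc v', hnw, hpair]
        simp
  · -- no previous write at position i: symbol is blank
    push_neg at hex
    have hint : ∀ u, u <+: w → u ≠ w → ∀ q'' i'', t.label u = Sum.inl (q'', i'') →
        i'' ≠ i := by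
      intro u hu hne q'' i'' hlab heq
      have hlt : u.length < w.length := by
        rcases hu with ⟨r, hr⟩
        rcases r with _ | ⟨x, r⟩
        · simp at hr; exact absurd hr hne
        · rw [← hr]; simp
      have htk : w.take u.length = u := by
        rcases hu with ⟨r, rfl⟩
        exact List.take_left
      have hmemu : u ∈ t.nodes := by
        rcases hu with ⟨r, rfl⟩
        exact mem_of_append t r u hwmem
      have heven : u.length % 2 = 0 := even_of_label_inl M t ht hmemu hlab
      exact hex u.length ⟨heven, hlt, q'', by rw [htk, hlab, heq]⟩
    have hblank : a = M.blank := by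
      apply hIII w k q i a b μ hmem hq ha
      intro u hu hne heven q'' i'' hlab
      exact hint u hu hne q'' i'' hlab
    have htape : tapeAt M t w i = M.blank := by
      have h := tapeAt_no_write M t ht (w.length / 2) [] w i (by omega) (by simp)
        (by simpa using hwmem) ?_
      · simpa [tapeAt_nil] using h
      · intro u hu hne _ q'' i'' hlab
        exact hint u hu hne q'' i'' (by simpa using hlab)
    rw [hblank, htape]

lemma relabel_label_inl {w : List ℕ} {q : Q} {i : ℕ} (h : t.label w = Sum.inl (q, i)) :
    (relabelTree M t).label w = Sum.inl (q, tapeAt M t w, i) := by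
  simp [relabelTree, FinTree.relabel, h]

lemma relabel_label_inr {w : List ℕ} {act : Γ × Γ × Bool} (h : t.label w = Sum.inr act) :
    (relabelTree M t).label w = Sum.inr act := by
  simp [relabelTree, FinTree.relabel, h]

lemma step_info (hd : IsDerivation M (fun _ => M.blank) (relabelTree M t))
    (ht : IsPseudoDerivation M t)
    {w : List ℕ} {k : ℕ} {q : Q} {i : ℕ} {a b : Γ} {μ : Bool}
    (hmem : w ++ [k] ∈ t.nodes) (hq : t.label w = Sum.inl (q, i))
    (ha : t.label (w ++ [k]) = Sum.inr (a, b, μ)) :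
    a = tapeAt M t w i ∧
    ∀ l q' i', w ++ [k, l] ∈ t.nodes → t.label (w ++ [k, l]) = Sum.inl (q', i') →
      ((μ = true → i' = i + 1) ∧ (μ = false → 0 < i ∧ i = i' + 1)) := by
  have hwmem : w ∈ t.nodes := mem_of_append t [k] w hmem
  have h3 := hd.2.2 w hwmem q (tapeAt M t w) i (relabel_label_inl M t hq)
  cases hg : M.g q with
  | false =>
    obtain ⟨hch, a₀, b₀, μ₀, q₀', hlab0, hdel, hgch, c', hlabc, hstep⟩ := h3.1 hg
    have hk0 : k = 0 := (hch k).mp hmem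
    subst hk0
    have heq := (relabel_label_inr M t ha).symm.trans hlab0
    obtain ⟨rfl, rfl, rfl⟩ : a = a₀ ∧ b = b₀ ∧ μ = μ₀ := by simpa using heq
    refine ⟨hstep.2.2.1.symm, ?_⟩
    intro l q' i' hml hlab'
    have hl0 : l = 0 := (hgch l).mp hml
    subst hl0
    have heqc := (relabel_label_inl M t hlab').symm.trans hlabc
    have hc' : c' = (q', tapeAt M t (w ++ [0, 0]), i') := by
      simpa [eq_comm] using heqc
    rcases hstep.2.2.2.2.2 with ⟨hμ, hi⟩ | ⟨hμ, hpos, hi⟩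
    · subst hμ
      rw [hc'] at hi
      simp at hi
      exact ⟨fun _ => hi, by simp⟩
    · subst hμ
      rw [hc'] at hi
      simp at hi
      exact ⟨by simp, fun _ => ⟨hpos, by omega⟩⟩
  | true =>
    obtain ⟨n, hch, e, he⟩ := h3.2 hg
    have hkn : k < n := (hch k).mp hmem
    obtain ⟨hlabK, hgch, c', hlabc, hstep⟩ := he ⟨k, hkn⟩
    have heq := (relabel_label_inr M t ha).symm.trans hlabK
    obtain ⟨ha1, hb1, hμ1⟩ : a = (e ⟨k, hkn⟩).1.2.1 ∧ b = (e ⟨k, hkn⟩).1.2.2.2.1 ∧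
        μ = (e ⟨k, hkn⟩).1.2.2.2.2 := by simpa [Prod.ext_iff] using heq
    refine ⟨ha1.trans (e ⟨k, hkn⟩).2.2.2, ?_⟩
    intro l q' i' hml hlab'
    have hl0 : l = 0 := (hgch l).mp hml
    subst hl0
    have heqc := (relabel_label_inl M t hlab').symm.trans hlabc
    have hc' : c' = (q', tapeAt M t (w ++ [k, 0]), i') := by
      simpa [eq_comm] using heqc
    rcases hstep.2.2.2.2.2 with ⟨hμ, hi⟩ | ⟨hμ, hpos, hi⟩
    · rw [← hμ1] at hμ
      subst hμ
      rw [hc'] at hi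
      simp at hi
      exact ⟨fun _ => hi, by simp⟩
    · rw [← hμ1] at hμ
      subst hμ
      rw [hc'] at hi
      simp at hi
      exact ⟨by simp, fun _ => ⟨hpos, by omega⟩⟩

end Aux

end SLPaper

open SLPaper

/-- Let `M` be an ATM. A pseudo-derivation `t` of `M` yields a
derivation of `M` if and only if `t` satisfies all three conditions (I), (II)
and (III). -/
theorem stmt8 (Q Γ : Type) (M : ATM Q Γ) (t : FinTree (PLabel Q Γ))
    (ht : IsPseudoDerivation M t) :
    YieldsDerivation M t ↔ (CondI M t ∧ CondII M t ∧ CondIII M t) := by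
  constructor
  · intro hy
    refine ⟨?_, ?_, ?_⟩
    · -- Condition (I)
      intro w k l q i a b μ q' i' hmem hq ha hq'
      have hmemk : w ++ [k] ∈ t.nodes := by
        apply mem_of_append t [l]
        simpa [List.append_assoc] using hmem
      obtain ⟨-, h2⟩ := step_info M t hy ht hmemk hq ha
      have h3 := h2 l q' i' hmem hq'
      exact ⟨h3.1, fun hμ => (h3.2 hμ).2⟩
    · -- Condition (II)
      intro w v k' q i a b μ q' a' b' μ' hvne hmem hwe hwve hq hq1 hq' hmem' ha' hint
      have h1 : a' = tapeAt M t (w ++ v) i := (step_info M t hy ht hmem' hq' ha').1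
      have hwe2 : w.length % 2 = 0 := Nat.even_iff.mp hwe
      have hwve2 : (w ++ v).length % 2 = 0 := Nat.even_iff.mp hwve
      rcases v with _ | ⟨c, _ | ⟨e, v'⟩⟩
      · exact absurd rfl hvne
      · exfalso; simp at hwve2; omega
      · have hq1' : t.label (w ++ [c]) = Sum.inr (a, b, μ) := by simpa using hq1
        have hassoc : ∀ z : List ℕ, w ++ (c :: e :: z) = (w ++ [c, e]) ++ z :=
          fun z => by simp
        have hpair := tapeAt_pair M t c e hwe2 hq hq1'
        have hnw : tapeAt M t ((w ++ [c, e]) ++ v') i = tapeAt M t (w ++ [c, e]) i := by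
          apply tapeAt_no_write M t ht (v'.length / 2)
          · simp at hwve2 ⊢; omega
          · simp; omega
          · rw [← hassoc]; exact hmem
          · intro u hu hune hul q'' i'' hlab
            refine hint (c :: e :: u) (by simpa [List.cons_prefix_cons] using hu) (by simp)
              (by simpa using hune) (by rw [hassoc u]; exact Nat.even_iff.mpr hul) q'' i''
              (by rw [hassoc u]; exact hlab)
        rw [h1, show w ++ c :: e :: v' = (w ++ [c, e]) ++ v' from hassoc v', hnw, hpair]
        simp
    · -- Condition (III)
      intro w k q i a b μ hmem hq ha hint
      have h1 : a = tapeAt M t w i := (step_info M t hy ht hmem hq ha).1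
      have hwmem : w ∈ t.nodes := mem_of_append t [k] w hmem
      have hwe : w.length % 2 = 0 := even_of_label_inl M t ht hwmem hq
      have h2 : tapeAt M t w i = M.blank := by
        have h := tapeAt_no_write M t ht (w.length / 2) [] w i (by omega) (by simp)
          (by simpa using hwmem) ?_
        · simpa [tapeAt_nil] using h
        · intro u hu hne hul q'' i'' hlab
          exact hint u hu hne (Nat.even_iff.mpr (by simpa using hul)) q'' i''
            (by simpa using hlab)
      rw [h1, h2]
  · rintro ⟨hI, hII, hIII⟩
    refine ⟨?_, ?_, ?_⟩
    · rw [relabel_label_inl M t ht.1, tapeAt_nil]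
    · intro w hw
      by_cases hwe : w.length % 2 = 0
      · rw [if_pos hwe]
        obtain ⟨q, i, h⟩ := label_even M t ht hw hwe
        exact ⟨(q, tapeAt M t w, i), relabel_label_inl M t h, tapeAt_finite M t w⟩
      · rw [if_neg hwe]
        obtain ⟨a, b, μ, h1, h2⟩ := label_odd M t ht hw (by omega)
        exact ⟨(a, b, μ), relabel_label_inr M t h1, h2⟩
    · intro w hw q tp i hlab
      obtain ⟨q₀, i₀, hl⟩ : ∃ q₀ i₀, t.label w = Sum.inl (q₀, i₀) := by
        rcases hl : t.label w with ⟨q₀, i₀⟩ | act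
        · exact ⟨q₀, i₀, rfl⟩
        · rw [relabel_label_inr M t hl] at hlab; exact absurd hlab (by simp)
      obtain ⟨hq0, htp, hi0⟩ : q₀ = q ∧ tapeAt M t w = tp ∧ i₀ = i := by
        have := (relabel_label_inl M t hl).symm.trans hlab
        simpa [Prod.ext_iff] using this
      rw [hq0, hi0] at hl
      subst htp
      have hwe : w.length % 2 = 0 := even_of_label_inl M t ht hw hl
      constructor
      · intro hg
        obtain ⟨hch, a, b, μ, q', j, hlab1, hdel, hgch, hlab2⟩ := (ht.2.2 w hw q i hl).1 hg
        refine ⟨hch, a, b, μ, q', relabel_label_inr M t hlab1, hdel, hgch,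
          (q', tapeAt M t (w ++ [0, 0]), j), relabel_label_inl M t hlab2, ?_⟩
        have hmem1 : w ++ [0] ∈ t.nodes := (hch 0).mpr rfl
        have hmem2 : w ++ [0, 0] ∈ t.nodes := (hgch 0).mpr rfl
        have hread : a = tapeAt M t w i := read_eq_tape M t ht hII hIII hmem1 hl hlab1
        have hmove := hI w 0 0 q i a b μ q' j hmem2 hl hlab1 hlab2
        refine ⟨hdel, rfl, hread.symm, rfl, tapeAt_pair M t 0 0 hwe hl hlab1, ?_⟩
        cases μ with
        | true => exact Or.inl ⟨rfl, hmove.1 rfl⟩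
        | false =>
          have h := hmove.2 rfl
          exact Or.inr ⟨rfl, by show 0 < i; omega, by show j + 1 = i; omega⟩
      · intro hg
        obtain ⟨n, hch, e, he⟩ := (ht.2.2 w hw q i hl).2 hg
        have hclaim : ∀ k : Fin n, (e k).1.2.1 = tapeAt M t w i := by
          intro k
          obtain ⟨hlab1, hgch, j, hlab2⟩ := he k
          exact read_eq_tape M t ht hII hIII ((hch k).mpr k.isLt) hl hlab1
        have hiff : ∀ τ : TMTrans Q Γ, (τ ∈ M.delta ∧ τ.1 = q) ↔
            (τ ∈ M.delta ∧ τ.1 = q ∧ τ.2.1 = tapeAt M t w i) := by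
          intro τ
          constructor
          · intro h
            refine ⟨h.1, h.2, ?_⟩
            have := hclaim (e.symm ⟨τ, h⟩)
            rwa [Equiv.apply_symm_apply] at this
          · exact fun h => ⟨h.1, h.2.1⟩
        refine ⟨n, hch, e.trans (Equiv.subtypeEquivRight hiff), ?_⟩
        intro k
        have hval : ((e.trans (Equiv.subtypeEquivRight hiff)) k).1 = (e k).1 := by
          simp [Equiv.subtypeEquivRight, Equiv.trans_apply]
          rfl
        obtain ⟨hlab1, hgch, j, hlab2⟩ := he k
        rw [hval]
        refine ⟨relabel_label_inr M t hlab1, hgch,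
          ((e k).1.2.2.1, tapeAt M t (w ++ [(k : ℕ), 0]), j), relabel_label_inl M t hlab2, ?_⟩
        have hmem2 : w ++ [(k : ℕ), 0] ∈ t.nodes := (hgch 0).mpr rfl
        have hread : (e k).1.2.1 = tapeAt M t w i := hclaim k
        have hmove := hI w (k : ℕ) 0 q i (e k).1.2.1 (e k).1.2.2.2.1 (e k).1.2.2.2.2
          (e k).1.2.2.1 j hmem2 hl hlab1 hlab2
        refine ⟨(e k).2.1, (e k).2.2.symm, hread.symm, rfl,
          tapeAt_pair M t (k : ℕ) 0 hwe hl hlab1, ?_⟩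
        cases hμ : (e k).1.2.2.2.2 with
        | true => exact Or.inl ⟨rfl, hmove.1 hμ⟩
        | false =>
          have h := hmove.2 hμ
          exact Or.inr ⟨rfl, by show 0 < i; omega, by show j + 1 = i; omega⟩
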